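/- Let m ≥ 2 be an integer, let e₁, …, e_m ∈ ℝ, let η > 0 and let t > 0. Then ∫_{Δ} exp(−i ∑_{k=1}^{m−1} s_k e_k) · exp(−i (t − ∑_{k=1}^{m−1} s_k) e_m) ds₁ … ds_{m−1} = (e^{ηt}/(2π)) ∫_ℝ e^{−iαt} ∏_{k=1}^{m} i/(α − e_k + iη) dα, where Δ = { (s₁,…,s_{m−1}) ∈ [0,∞)^{m−1} : s₁ + ⋯ + s_{m−1} ≤ t } and the integrand on the right-hand side is absolutely integrable over α ∈ ℝ. (This is the parametrization, by the coordinates s₁,…,s_{m−1}, of the integral ∫_{ℝ₊^m} ∏_{k=1}^m e^{−i s_k e_k} δ(∑_{k=1}^m s_k − t) ds.) -/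

import Mathlib

open scoped BigOperators Classical
open MeasureTheory
open scoped FourierTransform Real Topology
open Filter Set

noncomputable section

namespace KWE


def g (z : ℂ) : ℝ → ℂ := Set.indicator (Set.Ici 0) fun u => Complex.exp (z * u)

lemma norm_cexp_mul_real (z : ℂ) (u : ℝ) : ‖Complex.exp (z * u)‖ = Real.exp (z.re * u) := by
  rw [Complex.norm_exp]
  congr 1
  simp [Complex.mul_re]

lemma g_integrableOn {z : ℂ} (hz : z.re < 0) :
    IntegrableOn (fun u : ℝ => Complex.exp (z * u)) (Set.Ioi 0) := by
  have hb : (0:ℝ) < -z.re := by linarith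
  refine (exp_neg_integrableOn_Ioi 0 hb).mono' ?_ ?_
  · exact (Complex.continuous_exp.comp (continuous_const.mul Complex.continuous_ofReal)).aestronglyMeasurable
  · filter_upwards with u
    rw [norm_cexp_mul_real]
    simp [neg_mul]

lemma g_measurable (z : ℂ) : Measurable (g z) :=
  (Complex.measurable_exp.comp (measurable_const.mul Complex.measurable_ofReal)).indicator
    measurableSet_Ici

lemma g_integrable {z : ℂ} (hz : z.re < 0) : Integrable (g z) := by
  rw [g, integrable_indicator_iff measurableSet_Ici]
  rw [IntegrableOn, ← restrict_Ioi_eq_restrict_Ici]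
  exact g_integrableOn hz

lemma g_integral {z : ℂ} (hz : z.re < 0) : ∫ u, g z u = -z⁻¹ := by
  have hz0 : z ≠ 0 := fun h => by simp [h] at hz
  rw [g, integral_indicator measurableSet_Ici, ← restrict_Ioi_eq_restrict_Ici]
  have lim1 := intervalIntegral_tendsto_integral_Ioi 0 (g_integrableOn hz) tendsto_id
  have key : ∀ b : ℝ, ∫ x in (0:ℝ)..b, Complex.exp (z * x) = (Complex.exp (z * b) - 1) / z := by
    intro b
    rw [integral_exp_mul_complex hz0]
    simp
  have lim2 : Tendsto (fun b : ℝ => ∫ x in (0:ℝ)..b, Complex.exp (z * x)) atTop (𝓝 (-z⁻¹)) := by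
    simp_rw [key]
    have h0 : Tendsto (fun b : ℝ => Complex.exp (z * b)) atTop (𝓝 0) := by
      rw [tendsto_zero_iff_norm_tendsto_zero]
      simp_rw [norm_cexp_mul_real]
      refine Real.tendsto_exp_atBot.comp ?_
      exact Tendsto.const_mul_atTop_of_neg hz tendsto_id
    have : Tendsto (fun b : ℝ => (Complex.exp (z * b) - 1) / z) atTop (𝓝 ((0 - 1)/z)) :=
      (h0.sub (tendsto_const_nhds (x := (1:ℂ)))).div_const z
    simpa [zero_sub, neg_div, div_eq_mul_inv] using this
  exact tendsto_nhds_unique lim1 lim2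

lemma g_norm_le_one {z : ℂ} (hz : z.re ≤ 0) (u : ℝ) : ‖g z u‖ ≤ 1 := by
  rw [g]
  by_cases hu : u ∈ Set.Ici (0:ℝ)
  · rw [Set.indicator_of_mem hu, norm_cexp_mul_real]
    exact Real.exp_le_one_iff.mpr (mul_nonpos_of_nonpos_of_nonneg hz hu)
  · rw [Set.indicator_of_notMem hu]; simp

lemma g_continuousAt {z : ℂ} {u : ℝ} (hu : u ≠ 0) : ContinuousAt (g z) u := by
  rcases lt_or_gt_of_ne hu with h | h
  · have : g z =ᶠ[nhds u] (fun _ => 0) := by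
      filter_upwards [Iio_mem_nhds h] with x hx
      exact Set.indicator_of_notMem (by simpa using hx) _
    exact ContinuousAt.congr continuousAt_const this.symm
  · have : g z =ᶠ[nhds u] (fun x : ℝ => Complex.exp (z * x)) := by
      filter_upwards [Ioi_mem_nhds h] with x hx
      exact Set.indicator_of_mem (le_of_lt hx) _
    exact ContinuousAt.congr
      ((Complex.continuous_exp.comp (continuous_const.mul Complex.continuous_ofReal)).continuousAt) this.symm


lemma hyperplane_null (n : ℕ) (hn : 1 ≤ n) (t : ℝ) :
    volume {s : Fin n → ℝ | ∑ k, s k = t} = 0 := by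
  have hn0 : (n : ℝ) ≠ 0 := Nat.cast_ne_zero.mpr (by omega)
  set L : (Fin n → ℝ) →ₗ[ℝ] ℝ :=
    { toFun := fun s => ∑ k, s k
      map_add' := by intro x y; simp [Finset.sum_add_distrib]
      map_smul' := by intro c x; simp [Finset.mul_sum] }
  set s₀ : Fin n → ℝ := fun _ => t / n
  have hset : {s : Fin n → ℝ | ∑ k, s k = t}
      = (fun x => x + (-s₀)) ⁻¹' (LinearMap.ker L : Set (Fin n → ℝ)) := by
    ext s
    simp only [Set.mem_setOf_eq, Set.mem_preimage, SetLike.mem_coe, LinearMap.mem_ker]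
    have : L (s + -s₀) = (∑ k, s k) - t := by
      simp only [L, LinearMap.coe_mk, AddHom.coe_mk]
      simp only [Pi.add_apply, Pi.neg_apply, Finset.sum_add_distrib, Finset.sum_neg_distrib]
      simp only [s₀, Finset.sum_const, Finset.card_univ, Fintype.card_fin, nsmul_eq_mul]
      field_simp
      ring
    rw [this]
    constructor
    · intro h; rw [h]; ring
    · intro h; linarith [h]
  rw [hset, measure_preimage_add_right]
  refine Measure.addHaar_submodule _ _ ?_
  intro h
  have h1 : (fun _ => (1:ℝ)) ∈ LinearMap.ker L := by rw [h]; trivial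
  rw [LinearMap.mem_ker] at h1
  simp only [L, LinearMap.coe_mk, AddHom.coe_mk, Finset.sum_const, Finset.card_univ,
    Fintype.card_fin, nsmul_eq_mul, mul_one] at h1
  exact hn0 h1

lemma integrable_inv_sq_add (a η : ℝ) (hη : 0 < η) :
    Integrable (fun x : ℝ => ((x - a)^2 + η^2)⁻¹) := by
  have h1 : Integrable (fun x : ℝ => (1 + x^2)⁻¹) := integrable_inv_one_add_sq
  have h2 : Integrable (fun x : ℝ => (1 + (x * η⁻¹)^2)⁻¹) :=
    (integrable_comp_mul_right_iff _ (inv_ne_zero hη.ne')).2 h1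
  have h3 : Integrable (fun x : ℝ => (1 + ((x - a) * η⁻¹)^2)⁻¹) := h2.comp_sub_right a
  have h4 := h3.const_mul ((η^2)⁻¹)
  refine h4.congr (Eventually.of_forall fun x => ?_)
  field_simp
  ring



section main

variable {n : ℕ} (e : Fin (n+1) → ℝ) (η : ℝ)

def zz (α : ℝ) (k : Fin (n+1)) : ℂ := Complex.I*α - η - Complex.I*(e k)

lemma zz_re (α : ℝ) (k : Fin (n+1)) : (zz e η α k).re = -η := by
  simp [zz, Complex.sub_re, Complex.mul_re]

def Psi (s : Fin n → ℝ) (τ : ℝ) : ℂ :=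
  Complex.exp (-(Complex.I * ((∑ k : Fin n, s k * e k.castSucc : ℝ) : ℂ))) *
    Complex.exp (-(Complex.I * (((τ - ∑ k : Fin n, s k) * e (Fin.last n) : ℝ) : ℂ)))

def Phi (α : ℝ) (p : (Fin n → ℝ) × ℝ) : ℂ :=
  (∏ k : Fin n, g (zz e η α k.castSucc) (p.1 k)) *
    g (zz e η α (Fin.last n)) (p.2 - ∑ k, p.1 k)

def Sset (τ : ℝ) : Set (Fin n → ℝ) := {s | (∀ k, 0 ≤ s k) ∧ ∑ k, s k ≤ τ}

lemma Sset_measurable (τ : ℝ) : MeasurableSet (Sset (n := n) τ) := by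
  have h1 : MeasurableSet {s : Fin n → ℝ | ∀ k, 0 ≤ s k} := by
    rw [Set.setOf_forall]
    exact MeasurableSet.iInter fun k => measurableSet_le measurable_const (measurable_pi_apply k)
  have h2 : MeasurableSet {s : Fin n → ℝ | ∑ k, s k ≤ τ} :=
    measurableSet_le (Finset.measurable_sum _ fun k _ => measurable_pi_apply k) measurable_const
  exact (h1.inter h2 : _)

lemma Phi_eq (α : ℝ) (s : Fin n → ℝ) (τ : ℝ) :
    Phi e η α (s, τ) = Set.indicator (Sset τ)
      (fun s => Complex.exp ((Complex.I*α - η) * τ) * Psi e s τ) s := by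
  by_cases hs : s ∈ Sset (n := n) τ
  · rw [Set.indicator_of_mem hs]
    obtain ⟨h1, h2⟩ := hs
    simp only [Phi, g]
    rw [Set.indicator_of_mem (show (τ - ∑ k, s k) ∈ Set.Ici (0:ℝ) by
      simp only [Set.mem_Ici, sub_nonneg]; exact h2)]
    have hind : ∀ k : Fin n,
        (Set.indicator (Set.Ici 0) (fun u : ℝ => Complex.exp (zz e η α k.castSucc * u)) (s k))
          = Complex.exp (zz e η α k.castSucc * s k) :=
      fun k => Set.indicator_of_mem (h1 k) _
    simp_rw [hind]
    rw [← Complex.exp_sum, ← Complex.exp_add]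
    simp only [Psi]
    rw [← Complex.exp_add, ← Complex.exp_add]
    congr 1
    have hsum : ∑ k : Fin n, zz e η α k.castSucc * (s k : ℂ)
        = (Complex.I*α - η) * ((∑ k, s k : ℝ):ℂ)
          - Complex.I * ((∑ k : Fin n, s k * e k.castSucc : ℝ):ℂ) := by
      push_cast
      rw [Finset.mul_sum, Finset.mul_sum, ← Finset.sum_sub_distrib]
      refine Finset.sum_congr rfl fun k _ => ?_
      simp only [zz]; push_cast; ring
    rw [hsum]
    simp only [zz]
    push_cast
    ring
  · rw [Set.indicator_of_notMem hs]
    simp only [Sset, Set.mem_setOf_eq, not_and_or] at hs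
    rcases hs with hs | hs
    · push_neg at hs
      obtain ⟨k, hk⟩ := hs
      simp only [Phi, g]
      exact mul_eq_zero_of_left (Finset.prod_eq_zero (Finset.mem_univ k)
        (Set.indicator_of_notMem (not_le.mpr hk) _)) _
    · push_neg at hs
      simp only [Phi, g]
      exact mul_eq_zero_of_right _
        (Set.indicator_of_notMem (not_le.mpr (by linarith) : ¬ (0:ℝ) ≤ τ - ∑ k, s k) _)

lemma zz_re_neg {η : ℝ} (hη : 0 < η) (α : ℝ) (k : Fin (n+1)) : (zz e η α k).re < 0 := by
  rw [zz_re]; linarith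

def gn (η : ℝ) : ℝ → ℝ := Set.indicator (Set.Ici 0) fun u => Real.exp (-η * u)

lemma norm_g_zz (α : ℝ) (k : Fin (n+1)) (u : ℝ) : ‖g (zz e η α k) u‖ = gn η u := by
  simp only [g, gn]
  by_cases hu : u ∈ Set.Ici (0:ℝ)
  · rw [Set.indicator_of_mem hu, Set.indicator_of_mem hu, norm_cexp_mul_real, zz_re]
  · rw [Set.indicator_of_notMem hu, Set.indicator_of_notMem hu, norm_zero]

lemma gn_integrable {η : ℝ} (hη : 0 < η) : Integrable (gn η) := by
  have h := (g_integrable (z := zz (fun _ : Fin 1 => 0) η 0 0) (by rw [zz_re]; linarith)).norm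
  exact h.congr (Eventually.of_forall fun u => norm_g_zz (fun _ : Fin 1 => 0) η 0 0 u)

lemma gn_nonneg (η u : ℝ) : 0 ≤ gn η u := by
  rw [gn]; by_cases hu : u ∈ Set.Ici (0:ℝ)
  · rw [Set.indicator_of_mem hu]; positivity
  · rw [Set.indicator_of_notMem hu]

lemma Phi_measurable (α : ℝ) : Measurable (Phi e η (n := n) α) := by
  apply Measurable.mul
  · exact Finset.measurable_prod _ fun k _ =>
      (g_measurable _).comp ((measurable_pi_apply k).comp measurable_fst)
  · exact (g_measurable _).comp
      (measurable_snd.sub (Finset.measurable_sum _ fun k _ =>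
        (measurable_pi_apply k).comp measurable_fst))

lemma Phi_integrable {η : ℝ} (hη : 0 < η) (α : ℝ) :
    Integrable (Phi e η (n := n) α) ((volume : Measure (Fin n → ℝ)).prod volume) := by
  rw [integrable_prod_iff (Phi_measurable e η α).aestronglyMeasurable]
  constructor
  · refine Eventually.of_forall fun s => ?_
    have h := ((g_integrable (zz_re_neg e hη α (Fin.last n))).comp_sub_right
        (∑ k, s k)).const_mul (∏ k : Fin n, g (zz e η α k.castSucc) (s k))
    simpa only [Phi] using h
  · have heq : (fun s : Fin n → ℝ => ∫ τ, ‖Phi e η α (s, τ)‖)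
        = fun s => (∏ k : Fin n, gn η (s k)) * (∫ u, gn η u) := by
      funext s
      simp only [Phi, norm_mul, norm_prod]
      rw [integral_const_mul]
      congr 1
      · exact Finset.prod_congr rfl fun k _ => norm_g_zz e η α _ _
      · calc ∫ τ, ‖g (zz e η α (Fin.last n)) (τ - ∑ k, s k)‖
            = ∫ τ, gn η (τ - ∑ k, s k) := by
              exact integral_congr_ae (Eventually.of_forall fun τ => norm_g_zz e η α _ _)
          _ = ∫ u, gn η u := integral_sub_right_eq_self (gn η) _
    rw [heq]
    exact (Integrable.fintype_prod (f := fun _ : Fin n => gn η) fun k => gn_integrable hη).mul_const _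

def fK (τ : ℝ) : ℂ := ∫ s : Fin n → ℝ, Phi e η 0 (s, τ)

lemma fK_eq (α : ℝ) (τ : ℝ) :
    (∫ s : Fin n → ℝ, Phi e η α (s, τ))
      = Complex.exp ((Complex.I*α - η) * τ) * ∫ s in Sset τ, Psi e s τ := by
  have h1 : (fun s : Fin n → ℝ => Phi e η α (s, τ))
      = Set.indicator (Sset τ) (fun s => Complex.exp ((Complex.I*α - η) * τ) * Psi e s τ) :=
    funext fun s => Phi_eq e η α s τ
  rw [h1, integral_indicator (Sset_measurable τ), integral_const_mul]

lemma fK_integrable {η : ℝ} (hη : 0 < η) : Integrable (fK e η (n := n)) :=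
  (Phi_integrable e hη 0).integral_prod_right

def Gprod (α : ℝ) : ℂ := ∏ k : Fin (n+1), Complex.I / ((α : ℂ) - (e k : ℂ) + Complex.I * (η : ℂ))

lemma neg_zz_inv (α : ℝ) (k : Fin (n+1)) :
    -(zz e η α k)⁻¹ = Complex.I / ((α : ℂ) - (e k : ℂ) + Complex.I * (η : ℂ)) := by
  have hzz : zz e η α k = Complex.I * ((α : ℂ) - (e k : ℂ) + Complex.I * (η : ℂ)) := by
    simp only [zz]
    linear_combination (-η : ℂ) * Complex.I_sq
  rw [hzz, mul_inv, Complex.inv_I, div_eq_mul_inv]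
  ring

lemma fourier_fK {η : ℝ} (hη : 0 < η) (ξ : ℝ) :
    𝓕 (fK e η (n := n)) ξ = Gprod e η (-2*π*ξ) := by
  rw [Real.fourier_real_eq_integral_exp_smul]
  have step1 : ∀ v : ℝ, Complex.exp (↑(-2*π*v*ξ) * Complex.I) • fK e η v
      = ∫ s : Fin n → ℝ, Phi e η (-2*π*ξ) (s, v) := by
    intro v
    rw [smul_eq_mul, fK, fK_eq e η 0 v, fK_eq e η (-2*π*ξ) v, ← mul_assoc, ← Complex.exp_add]
    congr 2
    push_cast
    ring
  simp_rw [step1]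
  have hsw : Integrable (Function.uncurry fun (v : ℝ) (s : Fin n → ℝ) => Phi e η (-2*π*ξ) (s, v))
      ((volume : Measure ℝ).prod volume) := (Phi_integrable e hη (-2*π*ξ)).swap
  rw [integral_integral_swap hsw]
  have inner : ∀ s : Fin n → ℝ, (∫ v : ℝ, Phi e η (-2*π*ξ) (s, v))
      = (∏ k : Fin n, g (zz e η (-2*π*ξ) k.castSucc) (s k)) * (-(zz e η (-2*π*ξ) (Fin.last n))⁻¹) := by
    intro s
    simp only [Phi]
    rw [integral_const_mul, integral_sub_right_eq_self (g (zz e η (-2*π*ξ) (Fin.last n))) (∑ k, s k),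
      g_integral (zz_re_neg e hη _ _)]
  simp_rw [inner]
  rw [integral_mul_const,
    integral_fintype_prod_volume_eq_prod (ι := Fin n) (fun k => g (zz e η (-2*π*ξ) k.castSucc))]
  have : ∀ k : Fin n, (∫ x : ℝ, g (zz e η (-2*π*ξ) k.castSucc) x) = -(zz e η (-2*π*ξ) k.castSucc)⁻¹ :=
    fun k => g_integral (zz_re_neg e hη _ _)
  simp_rw [this]
  rw [Gprod, Fin.prod_univ_castSucc]
  simp_rw [neg_zz_inv e η]

lemma d_ne {η : ℝ} (hη : 0 < η) (α : ℝ) (k : Fin (n+1)) :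
    ((α:ℂ) - (e k : ℂ) + Complex.I * (η:ℂ)) ≠ 0 := by
  intro h0
  have him := congrArg Complex.im h0
  simp only [Complex.add_im, Complex.sub_im, Complex.ofReal_im, Complex.mul_im,
    Complex.I_re, Complex.I_im, Complex.ofReal_re, Complex.zero_im] at him
  simp at him
  exact hη.ne' him

lemma d_im (α : ℝ) (k : Fin (n+1)) : ((α:ℂ) - (e k : ℂ) + Complex.I * (η:ℂ)).im = η := by
  simp [Complex.add_im, Complex.sub_im, Complex.mul_im]

lemma norm_d_sq (α : ℝ) (k : Fin (n+1)) :
    ‖((α:ℂ) - (e k : ℂ) + Complex.I * (η:ℂ))‖^2 = (α - e k)^2 + η^2 := by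
  rw [Complex.sq_norm, Complex.normSq_apply]
  simp only [Complex.add_re, Complex.sub_re, Complex.ofReal_re, Complex.mul_re, Complex.I_re,
    Complex.I_im, Complex.ofReal_im, Complex.add_im, Complex.sub_im, Complex.mul_im]
  ring

lemma norm_d_ge {η : ℝ} (hη : 0 < η) (α : ℝ) (k : Fin (n+1)) :
    η ≤ ‖((α:ℂ) - (e k : ℂ) + Complex.I * (η:ℂ))‖ := by
  have h := Complex.abs_im_le_norm ((α:ℂ) - (e k : ℂ) + Complex.I * (η:ℂ))
  rw [d_im e η α k, abs_of_pos hη] at h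
  exact h

lemma Gprod_continuous {η : ℝ} (hη : 0 < η) : Continuous (Gprod e η (n := n)) := by
  refine continuous_finset_prod _ fun k _ => continuous_const.div ?_ (fun α => d_ne e hη α k)
  exact (Complex.continuous_ofReal.sub continuous_const).add continuous_const

lemma Gprod_integrable (hn : 1 ≤ n) {η : ℝ} (hη : 0 < η) : Integrable (Gprod e η (n := n)) := by
  have hi1 : Fin.last n ≠ (0 : Fin (n+1)) := by
    rw [Fin.ne_iff_vne]
    simp [Fin.last]
    omega
  set D : ℝ → ℝ := fun α =>
    ((((α - e 0)^2 + η^2)⁻¹ + ((α - e (Fin.last n))^2 + η^2)⁻¹) / 2) * (η⁻¹)^(n-1) with hD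
  have hDint : Integrable D :=
    (((integrable_inv_sq_add (e 0) η hη).add
      (integrable_inv_sq_add (e (Fin.last n)) η hη)).div_const 2).mul_const _
  refine hDint.mono' (Gprod_continuous e hη).aestronglyMeasurable
    (Eventually.of_forall fun α => ?_)
  rw [Gprod, norm_prod]
  set r : Fin (n+1) → ℝ := fun k => ‖Complex.I / ((α:ℂ) - (e k : ℂ) + Complex.I * (η:ℂ))‖ with hrdef
  have hr : ∀ k, r k = ‖((α:ℂ) - (e k : ℂ) + Complex.I * (η:ℂ))‖⁻¹ := by
    intro k
    rw [hrdef]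
    simp only [norm_div, Complex.norm_I, one_div]
  have hrnonneg : ∀ k, 0 ≤ r k := fun k => norm_nonneg _
  have hmem : Fin.last n ∈ Finset.univ.erase (0 : Fin (n+1)) :=
    Finset.mem_erase.mpr ⟨hi1, Finset.mem_univ _⟩
  have h1 : ∏ k, r k = r 0 * ∏ k ∈ Finset.univ.erase 0, r k :=
    (Finset.mul_prod_erase Finset.univ _ (Finset.mem_univ 0)).symm
  have h2 : ∏ k ∈ Finset.univ.erase 0, r k
      = r (Fin.last n) * ∏ k ∈ (Finset.univ.erase 0).erase (Fin.last n), r k :=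
    (Finset.mul_prod_erase _ _ hmem).symm
  have hcard : ((Finset.univ.erase (0 : Fin (n+1))).erase (Fin.last n)).card = n - 1 := by
    rw [Finset.card_erase_of_mem hmem, Finset.card_erase_of_mem (Finset.mem_univ _),
      Finset.card_univ, Fintype.card_fin]
    omega
  have hrest : ∏ k ∈ (Finset.univ.erase 0).erase (Fin.last n), r k ≤ (η⁻¹)^(n-1) := by
    calc ∏ k ∈ (Finset.univ.erase 0).erase (Fin.last n), r k
        ≤ ∏ _k ∈ (Finset.univ.erase (0:Fin (n+1))).erase (Fin.last n), η⁻¹ := by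
          refine Finset.prod_le_prod (fun k _ => hrnonneg k) (fun k _ => ?_)
          rw [hr k]
          exact inv_anti₀ hη (norm_d_ge e hη α k)
      _ = (η⁻¹)^(n-1) := by rw [Finset.prod_const, hcard]
  have e0 : (r 0)^2 = ((α - e 0)^2 + η^2)⁻¹ := by
    rw [hr 0, inv_pow, norm_d_sq]
  have e1 : (r (Fin.last n))^2 = ((α - e (Fin.last n))^2 + η^2)⁻¹ := by
    rw [hr _, inv_pow, norm_d_sq]
  have hmain : r 0 * r (Fin.last n)
      ≤ (((α - e 0)^2 + η^2)⁻¹ + ((α - e (Fin.last n))^2 + η^2)⁻¹) / 2 := by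
    nlinarith [sq_nonneg (r 0 - r (Fin.last n)), e0, e1]
  have hrestnn : 0 ≤ ∏ k ∈ (Finset.univ.erase 0).erase (Fin.last n), r k :=
    Finset.prod_nonneg fun k _ => hrnonneg k
  calc ∏ k, r k = (r 0 * r (Fin.last n)) * ∏ k ∈ (Finset.univ.erase 0).erase (Fin.last n), r k := by
        rw [h1, h2]; ring
    _ ≤ ((((α - e 0)^2 + η^2)⁻¹ + ((α - e (Fin.last n))^2 + η^2)⁻¹) / 2) * (η⁻¹)^(n-1) := by
        refine mul_le_mul hmain hrest hrestnn ?_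
        positivity
    _ = D α := rfl

lemma fK_continuousAt (hn : 1 ≤ n) {η : ℝ} (hη : 0 < η) (t : ℝ) :
    ContinuousAt (fK e η (n := n)) t := by
  have hfK : fK e η (n := n) = fun τ => ∫ s : Fin n → ℝ, Phi e η 0 (s, τ) := rfl
  rw [hfK]
  apply continuousAt_of_dominated (bound := fun s : Fin n → ℝ => ∏ k : Fin n, gn η (s k))
  · exact Eventually.of_forall fun τ => ((Phi_measurable e η 0).comp
      (measurable_id.prodMk measurable_const)).aestronglyMeasurable
  · refine Eventually.of_forall fun τ => Eventually.of_forall fun s => ?_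
    simp only [Phi, norm_mul, norm_prod]
    have h1 : ∏ k : Fin n, ‖g (zz e η 0 k.castSucc) (s k)‖ = ∏ k : Fin n, gn η (s k) :=
      Finset.prod_congr rfl fun k _ => norm_g_zz e η 0 _ _
    rw [h1]
    refine mul_le_of_le_one_right (Finset.prod_nonneg fun k _ => gn_nonneg η _) ?_
    exact g_norm_le_one (by rw [zz_re]; linarith) _
  · exact Integrable.fintype_prod (f := fun _ : Fin n => gn η) fun _ => gn_integrable hη
  · rw [ae_iff]
    refine measure_mono_null ?_ (hyperplane_null n hn t)
    intro s hs
    simp only [Set.mem_setOf_eq] at hs ⊢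
    by_contra hne
    apply hs
    have hc : ContinuousAt (g (zz e η 0 (Fin.last n))) (t - ∑ k, s k) :=
      g_continuousAt (sub_ne_zero_of_ne (Ne.symm hne))
    have hf2 : ContinuousAt (fun τ : ℝ => τ - ∑ k, s k) t :=
      (continuous_id.sub continuous_const).continuousAt
    have hcomp := ContinuousAt.comp (x := t) (f := fun τ : ℝ => τ - ∑ k, s k) hc hf2
    have : ContinuousAt (fun τ : ℝ => Phi e η 0 (s, τ)) t := by
      simp only [Phi]
      exact continuousAt_const.mul hcomp
    exact this

end main



/-- The resolvent identity (Lemma 4.3), with the delta function on the simplex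
parametrized by the first `m - 1 = n` coordinates; here `m = n + 1 ≥ 2`. -/
theorem resolvent_identity (n : ℕ) (hn : 1 ≤ n) (e : Fin (n+1) → ℝ) (η t : ℝ)
    (hη : 0 < η) (ht : 0 < t) :
    Integrable (fun α : ℝ =>
      Complex.exp (-(Complex.I * (α : ℂ) * (t : ℂ))) *
        ∏ k : Fin (n+1), Complex.I / ((α : ℂ) - (e k : ℂ) + Complex.I * (η : ℂ))) ∧
    (∫ s in {s : Fin n → ℝ | (∀ k, 0 ≤ s k) ∧ ∑ k, s k ≤ t},
        Complex.exp (-(Complex.I * ((∑ k : Fin n, s k * e k.castSucc : ℝ) : ℂ))) *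
        Complex.exp (-(Complex.I * (((t - ∑ k : Fin n, s k) * e (Fin.last n) : ℝ) : ℂ))))
      = ((Real.exp (η * t) / (2 * Real.pi) : ℝ) : ℂ) *
        ∫ α : ℝ, Complex.exp (-(Complex.I * (α : ℂ) * (t : ℂ))) *
          ∏ k : Fin (n+1), Complex.I / ((α : ℂ) - (e k : ℂ) + Complex.I * (η : ℂ)) := by
  have hGint : Integrable (fun α : ℝ =>
      Complex.exp (-(Complex.I * (α : ℂ) * (t : ℂ))) * Gprod e η α) := by
    refine (Gprod_integrable e hn hη).norm.mono' ?_ (Eventually.of_forall fun α => ?_)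
    · refine Continuous.aestronglyMeasurable (Continuous.mul ?_ (Gprod_continuous e hη))
      exact Complex.continuous_exp.comp (by fun_prop)
    · rw [norm_mul]
      have h1 : ‖Complex.exp (-(Complex.I * (α : ℂ) * (t : ℂ)))‖ = 1 := by
        rw [Complex.norm_exp]
        simp [Complex.mul_re]
      rw [h1, one_mul]
  refine ⟨hGint, ?_⟩
  have hFTfun : 𝓕 (fK e η (n := n)) = fun ξ => Gprod e η (-2*π*ξ) :=
    funext fun ξ => fourier_fK e hη ξ
  have hFTint : Integrable (𝓕 (fK e η (n := n))) := by
    rw [hFTfun]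
    have h2 : (-2*π : ℝ) ≠ 0 := mul_ne_zero (by norm_num) Real.pi_ne_zero
    exact (integrable_comp_mul_left_iff (Gprod e η (n := n)) h2).2 (Gprod_integrable e hn hη)
  have hinv := (fK_integrable e hη).fourierInv_fourier_eq hFTint (fK_continuousAt e hn hη t)
  set Gf : ℝ → ℂ := fun α => Complex.exp (-(Complex.I * (α:ℂ) * (t:ℂ))) * Gprod e η α with hGf
  have hπ : (0:ℝ) < 2*π := by positivity
  have hval : (∫ α : ℝ, Gf α) = ((2*π : ℝ) : ℂ) * fK e η t := by
    have hid : (fun ξ : ℝ => Gf (-2*π*ξ))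
        = fun ξ : ℝ => Complex.exp (((-2*π*ξ*(-t) : ℝ) : ℂ) * Complex.I) • 𝓕 (fK e η (n := n)) ξ := by
      funext ξ
      rw [hGf, hFTfun]
      simp only [smul_eq_mul]
      congr 1
      push_cast
      ring
    have hinv2 : (∫ ξ : ℝ, Gf (-2*π*ξ)) = fK e η t := by
      rw [hid]
      rw [show (∫ ξ : ℝ, Complex.exp (((-2*π*ξ*(-t) : ℝ) : ℂ) * Complex.I) • 𝓕 (fK e η (n := n)) ξ)
          = 𝓕 (𝓕 (fK e η (n := n))) (-t) from
        (Real.fourier_real_eq_integral_exp_smul (𝓕 (fK e η (n := n))) (-t)).symm]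
      rw [← Real.fourierInv_eq_fourier_neg]
      exact hinv
    have hcv := MeasureTheory.Measure.integral_comp_mul_left Gf (-2*π)
    rw [hinv2] at hcv
    have habs : |(-2*π:ℝ)⁻¹| = (2*π)⁻¹ := by
      rw [abs_inv, abs_of_neg (by linarith : (-2*π:ℝ) < 0)]
      norm_num
    rw [habs] at hcv
    -- hcv : fK e η t = (2*π)⁻¹ • ∫ Gf
    rw [hcv, Complex.real_smul, ← mul_assoc, ← Complex.ofReal_mul,
      mul_inv_cancel₀ hπ.ne', Complex.ofReal_one, one_mul]
  have hL : fK e η t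
      = Complex.exp ((Complex.I*((0:ℝ):ℂ) - (η:ℂ)) * (t:ℂ)) * ∫ s in Sset (n := n) t, Psi e s t :=
    fK_eq e η 0 t
  show (∫ s in Sset (n := n) t, Psi e s t)
      = ((Real.exp (η * t) / (2 * Real.pi) : ℝ) : ℂ) * ∫ α : ℝ, Gf α
  rw [hval, hL]
  have hexp : Complex.exp ((Complex.I*((0:ℝ):ℂ) - (η:ℂ)) * (t:ℂ))
      = ((Real.exp (-(η*t)) : ℝ) : ℂ) := by
    rw [Complex.ofReal_exp]
    congr 1
    push_cast
    ring
  rw [hexp]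
  set L : ℂ := ∫ s in Sset (n := n) t, Psi e s t
  have hsc : (((Real.exp (η * t) / (2 * Real.pi) : ℝ)) : ℂ)
      * (((2*π : ℝ):ℂ) * ((Real.exp (-(η*t)) : ℝ) : ℂ)) = 1 := by
    norm_cast
    have h1 : Real.exp (η*t) * Real.exp (-(η*t)) = 1 := by
      rw [← Real.exp_add]; simp
    field_simp
    linear_combination h1
  rw [show ((Real.exp (η * t) / (2 * Real.pi) : ℝ) : ℂ)
      * (((2*π : ℝ):ℂ) * (((Real.exp (-(η*t)) : ℝ) : ℂ) * L))
      = ((((Real.exp (η * t) / (2 * Real.pi) : ℝ)) : ℂ)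
      * (((2*π : ℝ):ℂ) * ((Real.exp (-(η*t)) : ℝ) : ℂ))) * L from by ring, hsc, one_mul]


end KWE
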